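/- Let K ≥ 1 be an integer, let b > 0 and σ > 0 be reals with σ² ≤ b². For each a ∈ {1,…,K} let {X_{a,s}}_{s≥1} be random variables taking values in [0,1], all mutually independent (across both a and s), such that for each a the X_{a,s} are identically distributed with mean d_a, satisfy |X_{a,s} − d_a| ≤ b almost surely, and Var(X_{a,s}) ≤ σ². Let C > 0 be a real number and suppose T = C / ( Σ_{a=1}^K f(b,σ,d_a) ) is a positive integer. Then Pr( Σ_{s=1}^T Σ_{a=1}^K X_{a,s} > C ) ≤ exp(−T). -/

import Mathlib

open MeasureTheory ProbabilityTheory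

/-- The effective consumption measure. -/
noncomputable def f (b σ d : ℝ) : ℝ :=
  4 * b / Real.log (4 * b ^ 2 / σ ^ 2 + 1) + d

/-- Taylor comparison: for `0 ≤ s ≤ t`, `e^s - s - 1 ≤ (s²/t²)(e^t - t - 1)`. -/
lemma exp_taylor_compare {s t : ℝ} (hs : 0 ≤ s) (hst : s ≤ t) (ht : 0 < t) :
    Real.exp s - s - 1 ≤ s ^ 2 / t ^ 2 * (Real.exp t - t - 1) := by
  have hsum : ∀ x : ℝ, Summable (fun n : ℕ => x ^ n / (n.factorial : ℝ)) := fun x =>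
    Real.summable_pow_div_factorial x
  have hexp : ∀ x : ℝ, Real.exp x = ∑' n : ℕ, x ^ n / (n.factorial : ℝ) := by
    intro x
    rw [Real.exp_eq_exp_ℝ, NormedSpace.exp_eq_tsum_div]
  have hsum2 : ∀ x : ℝ, Summable (fun n : ℕ => x ^ (n + 2) / ((n + 2).factorial : ℝ)) := fun x =>
    (summable_nat_add_iff 2).2 (hsum x)
  have key : ∀ x : ℝ, Real.exp x - x - 1 = ∑' n : ℕ, x ^ (n + 2) / ((n + 2).factorial : ℝ) := by
    intro x
    have h2 := Summable.sum_add_tsum_nat_add' (f := fun n : ℕ => x ^ n / (n.factorial : ℝ)) (k := 2)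
      (hsum2 x)
    have : ∑ i ∈ Finset.range 2, x ^ i / (i.factorial : ℝ) = 1 + x := by
      simp [Finset.sum_range_succ]
    rw [this] at h2
    rw [hexp x, ← h2]
    ring
  rw [key s, key t]
  rw [← tsum_mul_left]
  refine Summable.tsum_le_tsum (fun n => ?_) (hsum2 s) ((hsum2 t).mul_left _)
  have ht2 : (0:ℝ) < t ^ 2 := by positivity
  have hsn : s ^ (n + 2) = s ^ 2 * s ^ n := by ring
  have htn : t ^ (n + 2) = t ^ 2 * t ^ n := by ring
  have hfac : (0:ℝ) < ((n + 2).factorial : ℝ) := by positivity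
  rw [div_mul_div_comm, div_le_div_iff₀ hfac (by positivity)]
  have hpow : s ^ n ≤ t ^ n := pow_le_pow_left₀ hs hst n
  calc s ^ (n + 2) * (t ^ 2 * ((n+2).factorial : ℝ)) = (s ^ 2 * t^2 * ((n+2).factorial : ℝ)) * s ^ n := by ring
    _ ≤ (s ^ 2 * t^2 * ((n+2).factorial : ℝ)) * t ^ n := by
        apply mul_le_mul_of_nonneg_left hpow; positivity
    _ = s ^ 2 * t ^ (n + 2) * ((n+2).factorial : ℝ) := by ring

/-- For `|x| ≤ t`, `e^x - x - 1 ≤ (x²/t²)(e^t - t - 1)`. -/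
lemma exp_sub_le {x t : ℝ} (ht : 0 < t) (hxt : |x| ≤ t) :
    Real.exp x - x - 1 ≤ x ^ 2 / t ^ 2 * (Real.exp t - t - 1) := by
  have h1 : Real.exp x - x - 1 ≤ Real.exp |x| - |x| - 1 := by
    rcases le_or_gt 0 x with hx | hx
    · rw [abs_of_nonneg hx]
    · rw [abs_of_neg hx]
      have hsinh : Real.sinh x ≤ x := (Real.sinh_lt_self_iff.2 hx).le
      rw [Real.sinh_eq] at hsinh
      linarith
  have h2 := exp_taylor_compare (abs_nonneg x) hxt ht
  rw [sq_abs] at h2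
  linarith

/-- Bennett-type bound on the moment generating function. -/
lemma mgf_bennett {Ω : Type*} [MeasurableSpace Ω] {μ : Measure Ω} [IsProbabilityMeasure μ]
    {Y : Ω → ℝ} (hY : Measurable Y) {d b σ2 l : ℝ} (hb : 0 < b) (hl : 0 < l)
    (hmean : ∫ ω, Y ω ∂μ = d) (hdev : ∀ᵐ ω ∂μ, |Y ω - d| ≤ b)
    (hvar : variance Y μ ≤ σ2) :
    mgf Y μ l ≤ Real.exp (l * d + σ2 / b ^ 2 * (Real.exp (l * b) - l * b - 1)) := by
  set c := Real.exp (l * b) - l * b - 1 with hc_def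
  have hc : 0 ≤ c := by
    have := Real.add_one_le_exp (l * b); simp only [hc_def]; linarith
  have hσ2 : 0 ≤ σ2 := le_trans (variance_nonneg Y μ) hvar
  have hYd_meas : Measurable (fun ω => Y ω - d) := hY.sub measurable_const
  have hnormY : ∀ᵐ ω ∂μ, ‖Y ω‖ ≤ |d| + b := by
    filter_upwards [hdev] with ω hω
    rw [Real.norm_eq_abs]
    have := abs_sub_abs_le_abs_sub (Y ω) d
    linarith
  have int_exp : Integrable (fun ω => Real.exp (l * (Y ω - d))) μ := by
    refine Integrable.mono' (integrable_const (Real.exp (l * b)))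
      ((hYd_meas.const_mul l).exp.aestronglyMeasurable) ?_
    filter_upwards [hdev] with ω hω
    rw [Real.norm_eq_abs, abs_of_pos (Real.exp_pos _), Real.exp_le_exp]
    calc l * (Y ω - d) ≤ l * |Y ω - d| :=
          mul_le_mul_of_nonneg_left (le_abs_self _) hl.le
      _ ≤ l * b := mul_le_mul_of_nonneg_left hω hl.le
  have intY : Integrable Y μ :=
    Integrable.mono' (integrable_const (|d| + b)) hY.aestronglyMeasurable hnormY
  have intYd : Integrable (fun ω => Y ω - d) μ := intY.sub (integrable_const d)
  have intY2 : Integrable (fun ω => (Y ω - d) ^ 2) μ := by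
    refine Integrable.mono' (integrable_const (b ^ 2))
      ((hYd_meas.pow_const 2).aestronglyMeasurable) ?_
    filter_upwards [hdev] with ω hω
    rw [Real.norm_eq_abs, abs_pow]
    exact pow_le_pow_left₀ (abs_nonneg _) hω 2
  have hmem : MemLp Y 2 μ :=
    MemLp.mono_exponent (memLp_top_of_bound hY.aestronglyMeasurable (|d| + b) hnormY)
      le_top
  have hvar_eq : ∫ ω, (Y ω - d) ^ 2 ∂μ = variance Y μ := by
    rw [variance_eq_integral hY.aemeasurable, hmean]
  have hintYd0 : ∫ ω, (Y ω - d) ∂μ = 0 := by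
    rw [integral_sub intY (integrable_const d), hmean, integral_const]
    simp
  have hpt : ∀ᵐ ω ∂μ, Real.exp (l * (Y ω - d)) ≤
      1 + l * (Y ω - d) + (Y ω - d) ^ 2 * (c / b ^ 2) := by
    filter_upwards [hdev] with ω hω
    have hlb : 0 < l * b := mul_pos hl hb
    have habs : |l * (Y ω - d)| ≤ l * b := by
      rw [abs_mul, abs_of_pos hl]
      exact mul_le_mul_of_nonneg_left hω hl.le
    have h := exp_sub_le hlb habs
    have hx2 : (l * (Y ω - d)) ^ 2 / (l * b) ^ 2 = (Y ω - d) ^ 2 / b ^ 2 := by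
      field_simp
    rw [hx2] at h
    have : (Y ω - d) ^ 2 / b ^ 2 * c = (Y ω - d) ^ 2 * (c / b ^ 2) := by ring
    linarith [this ▸ h]
  have i0 : Integrable (fun _ : Ω => (1 : ℝ)) μ := integrable_const 1
  have i1 : Integrable (fun ω => l * (Y ω - d)) μ := intYd.const_mul l
  have i2 : Integrable (fun ω => (Y ω - d) ^ 2 * (c / b ^ 2)) μ := intY2.mul_const _
  have i01 : Integrable (fun ω => 1 + l * (Y ω - d)) μ := i0.add i1
  have hI : ∫ ω, Real.exp (l * (Y ω - d)) ∂μ ≤ 1 + σ2 / b ^ 2 * c := by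
    have e1 : ∫ ω, (1 + l * (Y ω - d) + (Y ω - d) ^ 2 * (c / b ^ 2)) ∂μ
        = 1 + variance Y μ * (c / b ^ 2) := by
      rw [integral_add i01 i2, integral_add i0 i1, integral_const, integral_const_mul,
        integral_mul_const, hintYd0, hvar_eq]
      simp
    have hmono := integral_mono_ae int_exp (i01.add i2) hpt
    simp only [Pi.add_apply] at hmono
    rw [e1] at hmono
    have h1 : variance Y μ * (c / b ^ 2) ≤ σ2 * (c / b ^ 2) :=
      mul_le_mul_of_nonneg_right hvar (by positivity)
    have h2 : σ2 * (c / b ^ 2) = σ2 / b ^ 2 * c := by ring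
    linarith
  have hstep : ∀ ω, Real.exp (l * Y ω) = Real.exp (l * d) * Real.exp (l * (Y ω - d)) := by
    intro ω; rw [← Real.exp_add]; ring_nf
  calc mgf Y μ l = ∫ ω, Real.exp (l * d) * Real.exp (l * (Y ω - d)) ∂μ := by
        rw [mgf]
        congr 1
        ext ω
        exact hstep ω
    _ = Real.exp (l * d) * ∫ ω, Real.exp (l * (Y ω - d)) ∂μ := integral_const_mul _ _
    _ ≤ Real.exp (l * d) * Real.exp (σ2 / b ^ 2 * c) := by
        apply mul_le_mul_of_nonneg_left _ (Real.exp_pos _).le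
        refine hI.trans ?_
        linarith [Real.add_one_le_exp (σ2 / b ^ 2 * c)]
    _ = Real.exp (l * d + σ2 / b ^ 2 * c) := (Real.exp_add _ _).symm

lemma key_numeric {b σ : ℝ} (hb : 0 < b) (hσ : 0 < σ) (hσb : σ ^ 2 ≤ b ^ 2) :
    σ ^ 2 / b ^ 2 * (Real.exp (Real.log (4 * b ^ 2 / σ ^ 2 + 1) / 2)
      - Real.log (4 * b ^ 2 / σ ^ 2 + 1) / 2 - 1) ≤ 1 := by
  have hσ2 : 0 < σ ^ 2 := by positivity
  set A := 4 * b ^ 2 / σ ^ 2 + 1 with hA_def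
  have hA5 : 5 ≤ A := by
    rw [hA_def]
    have : 4 ≤ 4 * b ^ 2 / σ ^ 2 := by
      rw [le_div_iff₀ hσ2]; nlinarith
    linarith
  have hApos : 0 < A := by linarith
  set u := Real.exp (Real.log A / 2) with hu_def
  have hupos : 0 < u := Real.exp_pos _
  have hu2 : u ^ 2 = A := by
    have h1 : u * u = Real.exp (Real.log A / 2 + Real.log A / 2) := (Real.exp_add _ _).symm
    have h2 : Real.log A / 2 + Real.log A / 2 = Real.log A := by ring
    rw [pow_two, h1, h2, Real.exp_log hApos]
  have hu2' : 2 ≤ u := by nlinarith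
  have hlogu : Real.log A / 2 = Real.log u := by rw [hu_def, Real.log_exp]
  have hlog2 : (0.6931471803 : ℝ) < Real.log 2 := Real.log_two_gt_d9
  have hloguu : Real.log 2 ≤ Real.log u := Real.log_le_log (by norm_num) hu2'
  rw [hlogu]
  have hkey : u - Real.log u - 1 ≤ (u ^ 2 - 1) / 4 := by
    nlinarith [sq_nonneg (u - 2)]
  have heq : σ ^ 2 / b ^ 2 * ((u ^ 2 - 1) / 4) = 1 := by
    rw [hu2, hA_def]
    field_simp
    ring
  calc σ ^ 2 / b ^ 2 * (u - Real.log u - 1) ≤ σ ^ 2 / b ^ 2 * ((u ^ 2 - 1) / 4) := by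
        apply mul_le_mul_of_nonneg_left hkey (by positivity)
    _ = 1 := heq

theorem bound_count {Ω : Type*} [MeasureSpace Ω] [IsProbabilityMeasure (ℙ : Measure Ω)]
    (K : ℕ) (hK : 1 ≤ K) (b σ : ℝ) (hb : 0 < b) (hσ : 0 < σ) (hσb : σ ^ 2 ≤ b ^ 2)
    (X : Fin K → ℕ → Ω → ℝ) (d : Fin K → ℝ)
    (hmeas : ∀ a s, Measurable (X a s))
    (hindep : iIndepFun (fun p : Fin K × ℕ => X p.1 p.2) ℙ)
    (hident : ∀ a s, IdentDistrib (X a s) (X a 0) ℙ ℙ)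
    (hrange : ∀ a s, ∀ᵐ ω ∂ℙ, X a s ω ∈ Set.Icc (0 : ℝ) 1)
    (hmean : ∀ a s, ∫ ω, X a s ω ∂ℙ = d a)
    (hdev : ∀ a s, ∀ᵐ ω ∂ℙ, |X a s ω - d a| ≤ b)
    (hvar : ∀ a s, variance (X a s) ℙ ≤ σ ^ 2)
    (C : ℝ) (hC : 0 < C) (T : ℕ) (hT : 0 < T)
    (hTval : (T : ℝ) = C / ∑ a, f b σ (d a)) :
    (ℙ {ω | C < ∑ s ∈ Finset.range T, ∑ a, X a s ω}).toReal ≤ Real.exp (-(T : ℝ)) := by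
  haveI : Nonempty (Fin K) := ⟨⟨0, hK⟩⟩
  have hσ2 : 0 < σ ^ 2 := by positivity
  set L := Real.log (4 * b ^ 2 / σ ^ 2 + 1) with hL_def
  have hA5 : (5 : ℝ) ≤ 4 * b ^ 2 / σ ^ 2 + 1 := by
    have : 4 ≤ 4 * b ^ 2 / σ ^ 2 := by
      rw [le_div_iff₀ hσ2]; nlinarith
    linarith
  have hL : 0 < L := by
    rw [hL_def]; exact Real.log_pos (by linarith)
  set l := L / (2 * b) with hl_def
  have hlpos : 0 < l := by rw [hl_def]; positivity
  have hlb : l * b = L / 2 := by rw [hl_def]; field_simp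
  have hf_eq : ∀ x : ℝ, f b σ x = 4 * b / L + x := by
    intro x; simp only [f, hL_def]
  have hd0 : ∀ a, 0 ≤ d a := by
    intro a
    rw [← hmean a 0]
    apply integral_nonneg_of_ae
    filter_upwards [hrange a 0] with ω h using h.1
  have hfpos : ∀ a : Fin K, 0 < f b σ (d a) := by
    intro a
    rw [hf_eq]
    have h1 : 0 < 4 * b / L := by positivity
    linarith [hd0 a]
  have hsum_pos : 0 < ∑ a, f b σ (d a) :=
    Finset.sum_pos (fun a _ => hfpos a) Finset.univ_nonempty
  have hCval : C = (T : ℝ) * ∑ a, f b σ (d a) := by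
    have := (div_eq_iff hsum_pos.ne').mp hTval.symm
    linarith
  -- the summed process
  set Y : Fin K × ℕ → Ω → ℝ := fun p => X p.1 p.2 with hY_def
  set s : Finset (Fin K × ℕ) := (Finset.univ : Finset (Fin K)) ×ˢ Finset.range T with hs_def
  set S : Ω → ℝ := ∑ p ∈ s, Y p with hS_def
  have hSapp : ∀ ω, S ω = ∑ i ∈ Finset.range T, ∑ a, X a i ω := by
    intro ω
    rw [hS_def, Finset.sum_apply, hs_def, Finset.sum_product]
    exact Finset.sum_comm
  have hsub : {ω | C < ∑ i ∈ Finset.range T, ∑ a, X a i ω} ⊆ {ω | C ≤ S ω} := by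
    intro ω h
    rw [Set.mem_setOf_eq, hSapp]
    exact le_of_lt h
  have hYmeas : ∀ p : Fin K × ℕ, Measurable (Y p) := fun p => hmeas p.1 p.2
  have hSapp' : ∀ ω, S ω = ∑ p ∈ s, Y p ω := fun ω => by rw [hS_def, Finset.sum_apply]
  have hSmeas : Measurable S := by
    have : S = fun ω => ∑ p ∈ s, Y p ω := funext hSapp'
    rw [this]
    exact Finset.measurable_sum s fun p _ => hYmeas p
  have hae : ∀ᵐ ω ∂ℙ, ∀ (a : Fin K) (i : ℕ), X a i ω ∈ Set.Icc (0 : ℝ) 1 := by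
    rw [ae_all_iff]
    intro a
    rw [ae_all_iff]
    intro i
    exact hrange a i
  have hint : Integrable (fun ω => Real.exp (l * S ω)) ℙ := by
    refine Integrable.mono' (integrable_const (Real.exp (l * s.card)))
      ((hSmeas.const_mul l).exp.aestronglyMeasurable) ?_
    filter_upwards [hae] with ω hω
    rw [Real.norm_eq_abs, abs_of_pos (Real.exp_pos _), Real.exp_le_exp]
    apply mul_le_mul_of_nonneg_left _ hlpos.le
    rw [hSapp' ω]
    calc ∑ p ∈ s, Y p ω ≤ ∑ _p ∈ s, (1 : ℝ) :=
          Finset.sum_le_sum fun p _ => (hω p.1 p.2).2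
      _ = s.card := by simp
  -- Chernoff
  have hcher := measure_ge_le_exp_mul_mgf (μ := ℙ) (X := S) (t := l) C hlpos.le hint
  have hmono : (ℙ {ω | C < ∑ i ∈ Finset.range T, ∑ a, X a i ω}).toReal
      ≤ (ℙ {ω | C ≤ S ω}).toReal :=
    ENNReal.toReal_mono (measure_ne_top _ _) (measure_mono hsub)
  have hprod : mgf S ℙ l = ∏ p ∈ s, mgf (Y p) ℙ l := hindep.mgf_sum hYmeas s
  set c := Real.exp (l * b) - l * b - 1 with hc_def
  have hq : ∀ p : Fin K × ℕ, mgf (Y p) ℙ l ≤ Real.exp (l * d p.1 + σ ^ 2 / b ^ 2 * c) :=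
    fun p => mgf_bennett (hYmeas p) hb hlpos (hmean p.1 p.2) (hdev p.1 p.2) (hvar p.1 p.2)
  have hprodle : ∏ p ∈ s, mgf (Y p) ℙ l ≤ ∏ p ∈ s, Real.exp (l * d p.1 + σ ^ 2 / b ^ 2 * c) :=
    Finset.prod_le_prod (fun p _ => mgf_nonneg) (fun p _ => hq p)
  have hprodexp : ∏ p ∈ s, Real.exp (l * d p.1 + σ ^ 2 / b ^ 2 * c)
      = Real.exp (∑ p ∈ s, (l * d p.1 + σ ^ 2 / b ^ 2 * c)) := (Real.exp_sum _ _).symm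
  have hsum_eq : ∑ p ∈ s, (l * d p.1 + σ ^ 2 / b ^ 2 * c)
      = (T : ℝ) * (l * (∑ a, d a) + (K : ℝ) * (σ ^ 2 / b ^ 2 * c)) := by
    rw [hs_def, Finset.sum_product]
    simp only [Finset.sum_const, Finset.card_range, nsmul_eq_mul]
    rw [← Finset.mul_sum, Finset.sum_add_distrib, ← Finset.mul_sum, Finset.sum_const,
      Finset.card_univ, Fintype.card_fin, nsmul_eq_mul]
  -- the key exponent bound
  have hqle : σ ^ 2 / b ^ 2 * c ≤ 1 := by
    have := key_numeric hb hσ hσb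
    rw [← hL_def] at this
    rw [hc_def, hlb]
    convert this using 3
  have hsumf : ∑ a, f b σ (d a) = (K : ℝ) * (4 * b / L) + ∑ a, d a := by
    simp only [hf_eq]
    rw [Finset.sum_add_distrib, Finset.sum_const, Finset.card_univ, Fintype.card_fin,
      nsmul_eq_mul]
  have hl4b : l * (4 * b / L) = 2 := by
    rw [hl_def]
    field_simp
    ring
  have hexp_le : -l * C + (T : ℝ) * (l * (∑ a, d a) + (K : ℝ) * (σ ^ 2 / b ^ 2 * c))
      ≤ -(T : ℝ) := by
    rw [hCval, hsumf]
    have hTpos : (0 : ℝ) < T := by exact_mod_cast hT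
    have hKge : (1 : ℝ) ≤ K := by exact_mod_cast hK
    have expand : -l * ((T : ℝ) * ((K : ℝ) * (4 * b / L) + ∑ a, d a))
        + (T : ℝ) * (l * (∑ a, d a) + (K : ℝ) * (σ ^ 2 / b ^ 2 * c))
        = (T : ℝ) * (K : ℝ) * (σ ^ 2 / b ^ 2 * c - l * (4 * b / L)) := by ring
    rw [expand, hl4b]
    have h1 : σ ^ 2 / b ^ 2 * c - 2 ≤ -1 := by linarith
    have h2 : (T : ℝ) * (K : ℝ) * (σ ^ 2 / b ^ 2 * c - 2) ≤ (T : ℝ) * (K : ℝ) * (-1) :=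
      mul_le_mul_of_nonneg_left h1 (by positivity)
    have h3 : (T : ℝ) ≤ (T : ℝ) * (K : ℝ) := by nlinarith
    linarith
  -- assemble
  calc (ℙ {ω | C < ∑ i ∈ Finset.range T, ∑ a, X a i ω}).toReal
      ≤ (ℙ {ω | C ≤ S ω}).toReal := hmono
    _ ≤ Real.exp (-l * C) * mgf S ℙ l := hcher
    _ ≤ Real.exp (-l * C) * Real.exp ((T : ℝ) * (l * (∑ a, d a)
          + (K : ℝ) * (σ ^ 2 / b ^ 2 * c))) := by
        apply mul_le_mul_of_nonneg_left _ (Real.exp_pos _).le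
        rw [hprod]
        exact hprodle.trans (le_of_eq (hprodexp.trans (by rw [hsum_eq])))
    _ = Real.exp (-l * C + (T : ℝ) * (l * (∑ a, d a) + (K : ℝ) * (σ ^ 2 / b ^ 2 * c))) :=
        (Real.exp_add _ _).symm
    _ ≤ Real.exp (-(T : ℝ)) := Real.exp_le_exp.2 hexp_le
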